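/- For all nonnegative integers n, sum_{k=0}^n C_{k+1} binom(n,k) x^k = sum_{k=0}^{floor(n/2)} C_k binom(n,2k) x^{2k} (1+2x)^{n-2k}, where C_m is the m-th Catalan number. -/

import Mathlib

open Polynomial Finset

lemma tri (n m s : ℕ) (h : s ≤ m) :
    n.choose s * (n - s).choose (m - s) = n.choose m * m.choose s := by
  rcases le_or_gt m n with hmn | hmn
  · exact (Nat.choose_mul h).symm
  · rw [Nat.choose_eq_zero_of_lt hmn, zero_mul]
    rcases le_or_gt s n with hsn | hsn
    · rw [Nat.choose_eq_zero_of_lt (show n-s < m-s by omega), mul_zero]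
    · rw [Nat.choose_eq_zero_of_lt hsn, zero_mul]

lemma cat_sub (k : ℕ) : (catalan k : ℤ) = (2*k).choose k - (2*k).choose (k+1) := by
  have h1 : ((k:ℤ)+1) * catalan k = (2*k).choose k := by
    exact_mod_cast congrArg (Nat.cast : ℕ → ℤ) (succ_mul_catalan_eq_centralBinom k)
  have h2 : ((2*k).choose (k+1) : ℤ) * ((k:ℤ)+1) = ((2*k).choose k : ℤ) * k := by
    have := Nat.choose_succ_right_eq (2*k) k
    rw [show 2*k - k = k by omega] at this
    exact_mod_cast congrArg (Nat.cast : ℕ → ℤ) this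
  have hne : ((k:ℤ)+1) ≠ 0 := by positivity
  apply mul_left_cancel₀ hne
  linear_combination h1 + h2

lemma cat_succ_sub (m : ℕ) : (catalan (m+1) : ℤ) = (2*m).choose m - (2*m).choose (m+2) := by
  rcases Nat.eq_zero_or_pos m with rfl | hm
  · simp [catalan_one]
  have h1 : ((m:ℤ)+2) * catalan (m+1) = ((2*m+2).choose (m+1) : ℤ) := by
    have := succ_mul_catalan_eq_centralBinom (m+1)
    rw [Nat.centralBinom, show 2*(m+1) = 2*m+2 by ring] at this
    exact_mod_cast congrArg (Nat.cast : ℕ → ℤ) this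
  have h2 : ((2*m+2).choose (m+1) : ℤ) = 2*((2*m).choose m + (2*m).choose (m+1)) := by
    have e1 : (2*m+2).choose (m+1) = (2*m+1).choose m + (2*m+1).choose (m+1) :=
      Nat.choose_succ_succ (2*m+1) m
    have e2 : (2*m+1).choose m = (2*m+1).choose (m+1) := by
      rw [← Nat.choose_symm (show m+1 ≤ 2*m+1 by omega), show 2*m+1-(m+1) = m by omega]
    have e3 : (2*m+1).choose (m+1) = (2*m).choose m + (2*m).choose (m+1) :=
      Nat.choose_succ_succ (2*m) m
    push_cast [e1, e2, e3]; ring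
  have h3 : ((2*m).choose (m+1) : ℤ) * ((m:ℤ)+1) = ((2*m).choose m : ℤ) * m := by
    have := Nat.choose_succ_right_eq (2*m) m
    rw [show 2*m - m = m by omega] at this
    exact_mod_cast congrArg (Nat.cast : ℕ → ℤ) this
  have h4 : ((2*m).choose (m+2) : ℤ) * ((m:ℤ)+2) = ((2*m).choose (m+1) : ℤ) * ((m:ℤ)-1) := by
    have := Nat.choose_succ_right_eq (2*m) (m+1)
    rw [show 2*m - (m+1) = m-1 by omega] at this
    have := congrArg (Nat.cast : ℕ → ℤ) this
    push_cast [Nat.cast_sub hm] at this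
    linarith [this]
  have hne : ((m:ℤ)+1) * ((m:ℤ)+2) ≠ 0 := by positivity
  apply mul_left_cancel₀ hne
  linear_combination ((m:ℤ)+1) * h1 + ((m:ℤ)+1) * h2 + ((m:ℤ)+1) * h3 + ((m:ℤ)+1) * h4

lemma coeff_sq (m i : ℕ) : ((((1:ℤ[X]) + X)^2)^m).coeff i =
    ∑ j ∈ range (m+1), (m.choose j : ℤ) *
      (if j ≤ i then 2^(j-(i-j)) * ((j.choose (i-j)):ℤ) else 0) := by
  have h : ((1:ℤ[X]) + X)^2 = X * (X + C 2) + 1 := by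
    rw [map_ofNat]; ring
  rw [h, add_pow, finset_sum_coeff]
  refine Finset.sum_congr rfl fun j hj => ?_
  rw [one_pow, mul_one, mul_pow, ← Nat.cast_id (m.choose j), ← C_eq_natCast, mul_comm _ (C _),
    coeff_C_mul, coeff_X_pow_mul']
  split_ifs with hji
  · rw [coeff_X_add_C_pow]
  · ring

lemma S1 (m : ℕ) : ∑ k ∈ range (m+1), (m.choose (2*k) : ℤ) * ((2*k).choose k) * 2^(m-2*k)
    = ((2*m).choose m : ℤ) := by
  have key : (((1:ℤ[X]) + X)^2)^m = ((1:ℤ[X]) + X)^(2*m) := by rw [← pow_mul, mul_comm]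
  have h := coeff_sq m m
  rw [key, coeff_one_add_X_pow, ← Finset.sum_range_reflect] at h
  rw [h]
  refine Finset.sum_congr rfl fun k hk => ?_
  simp only [mem_range] at hk
  have hk' : k ≤ m := by omega
  rw [show m + 1 - 1 - k = m - k by omega, if_pos (by omega : m - k ≤ m),
    show m - (m-k) = k by omega,
    Nat.choose_symm hk', show m - k - k = m - 2*k by omega]
  have tri' : (m.choose k : ℤ) * ((m-k).choose k) = (m.choose (2*k) : ℤ) * ((2*k).choose k) := by
    have h2 := tri m (2*k) k (by omega)
    rw [show 2*k - k = k by omega] at h2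
    exact_mod_cast congrArg (Nat.cast : ℕ → ℤ) h2
  linear_combination (-(2:ℤ)^(m - 2*k)) * tri'

lemma S2 (m : ℕ) : ∑ k ∈ range (m+1), (m.choose (2*k) : ℤ) * ((2*k).choose (k+1)) * 2^(m-2*k)
    = ((2*m).choose (m+2) : ℤ) := by
  have key : (((1:ℤ[X]) + X)^2)^m = ((1:ℤ[X]) + X)^(2*m) := by rw [← pow_mul, mul_comm]
  have h := coeff_sq m (m+2)
  rw [key, coeff_one_add_X_pow, ← Finset.sum_range_reflect] at h
  rw [h, Finset.sum_range_succ', Finset.sum_range_succ]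
  congr 1
  · refine Finset.sum_congr rfl fun i hi => ?_
    simp only [mem_range] at hi
    rw [show m + 1 - 1 - i = m - i by omega, if_pos (by omega : m - i ≤ m + 2),
      show m + 2 - (m - i) = i + 2 by omega,
      Nat.choose_symm (by omega : i ≤ m), show m - i - (i+2) = m - 2*(i+1) by omega]
    have tri2 : (m.choose i : ℤ) * ((m-i).choose (i+2)) =
        (m.choose (2*(i+1)) : ℤ) * ((2*(i+1)).choose (i+1+1)) := by
      have h2 := tri m (2*i+2) i (by omega)
      rw [show 2*i+2 - i = i+2 by omega] at h2
      have h3 : (2*i+2).choose i = (2*i+2).choose (i+2) := by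
        rw [← Nat.choose_symm (by omega : i+2 ≤ 2*i+2), show 2*i+2-(i+2) = i by omega]
      rw [h3] at h2
      rw [show 2*(i+1) = 2*i+2 by omega, show i+1+1 = i+2 by omega]
      exact_mod_cast congrArg (Nat.cast : ℕ → ℤ) h2
    linear_combination (-(2:ℤ)^(m - 2*(i+1))) * tri2
  · rw [show m + 1 - 1 - m = 0 by omega]
    simp

lemma touchard (m : ℕ) :
    ∑ k ∈ range (m+1), (catalan k : ℤ) * (m.choose (2*k)) * 2^(m-2*k) = (catalan (m+1) : ℤ) := by
  have step : ∀ k ∈ range (m+1), (catalan k : ℤ) * (m.choose (2*k)) * 2^(m-2*k)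
      = (m.choose (2*k) : ℤ) * ((2*k).choose k) * 2^(m-2*k)
        - (m.choose (2*k) : ℤ) * ((2*k).choose (k+1)) * 2^(m-2*k) := by
    intro k _
    rw [cat_sub]; ring
  rw [Finset.sum_congr rfl step, Finset.sum_sub_distrib, S1, S2, cat_succ_sub]

lemma coeff12 (j t : ℕ) : (((1:ℤ[X]) + 2*X)^j).coeff t = 2^t * (j.choose t : ℤ) := by
  have h : ((1:ℤ[X]) + 2*X) = X * C 2 + 1 := by
    rw [map_ofNat]; ring
  rw [h, add_pow, finset_sum_coeff]
  have e : ∀ i ∈ range (j+1), (((X * C 2)^i * 1^(j-i) * ((j.choose i : ℕ) : ℤ[X])).coeff t)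
      = if t = i then 2^i * (j.choose i : ℤ) else 0 := by
    intro i _
    rw [one_pow, mul_one, mul_pow, ← C_pow, ← Nat.cast_id (j.choose i), ← C_eq_natCast,
      mul_assoc, ← C_mul, coeff_mul_C, coeff_X_pow]
    split_ifs with hti
    · rw [one_mul]
    · rw [zero_mul]
  rw [Finset.sum_congr rfl e, Finset.sum_ite_eq (range (j+1)) t (fun i => 2^i * (j.choose i:ℤ))]
  split_ifs with ht
  · rfl
  · rw [mem_range, not_lt] at ht
    rw [Nat.choose_eq_zero_of_lt (by omega), Nat.cast_zero, mul_zero]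

theorem stmt14 (n : ℕ) :
    (∑ k ∈ Finset.range (n + 1), C ((catalan (k + 1) : ℤ) * (n.choose k)) * X ^ k) =
      ∑ k ∈ Finset.range (n / 2 + 1),
        C ((catalan k : ℤ) * (n.choose (2 * k))) * X ^ (2 * k) * (1 + 2 * X) ^ (n - 2 * k) := by
  refine Polynomial.ext fun m => ?_
  have hL : (∑ k ∈ Finset.range (n + 1), C ((catalan (k + 1) : ℤ) * (n.choose k)) * X ^ k).coeff m
      = (catalan (m+1) : ℤ) * (n.choose m) := by
    rw [finset_sum_coeff]
    simp only [coeff_C_mul, coeff_X_pow, mul_ite, mul_one, mul_zero]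
    rw [Finset.sum_ite_eq (range (n+1)) m (fun k => (catalan (k+1):ℤ) * (n.choose k))]
    split_ifs with hm
    · rfl
    · rw [mem_range, not_lt] at hm
      rw [Nat.choose_eq_zero_of_lt (by omega), Nat.cast_zero, mul_zero]
  have hR : (∑ k ∈ Finset.range (n / 2 + 1),
        C ((catalan k : ℤ) * (n.choose (2 * k))) * X ^ (2 * k) * (1 + 2 * X) ^ (n - 2 * k)).coeff m
      = ∑ k ∈ Finset.range (n / 2 + 1), (catalan k : ℤ) * (n.choose (2*k)) *
          (if 2*k ≤ m then 2^(m-2*k) * ((n-2*k).choose (m-2*k) : ℤ) else 0) := by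
    rw [finset_sum_coeff]
    refine Finset.sum_congr rfl fun k hk => ?_
    rw [mul_assoc, coeff_C_mul, coeff_X_pow_mul']
    split_ifs with h2k
    · rw [coeff12]
    · rw [mul_zero]
  rw [hL, hR]
  have step : ∀ k ∈ Finset.range (n/2+1), (catalan k : ℤ) * (n.choose (2*k)) *
      (if 2*k ≤ m then 2^(m-2*k) * ((n-2*k).choose (m-2*k) : ℤ) else 0)
      = (catalan k : ℤ) * (m.choose (2*k)) * 2^(m-2*k) * (n.choose m) := by
    intro k _
    split_ifs with h2k
    · have := tri n m (2*k) h2k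
      have hc : (n.choose (2*k) : ℤ) * ((n-2*k).choose (m-2*k)) =
          (n.choose m : ℤ) * (m.choose (2*k)) := by exact_mod_cast congrArg (Nat.cast : ℕ → ℤ) this
      linear_combination ((2:ℤ)^(m-2*k) * catalan k) * hc
    · rw [Nat.choose_eq_zero_of_lt (by omega : m < 2*k), Nat.cast_zero]
      ring
  rw [Finset.sum_congr rfl step]
  have factored : ∑ k ∈ Finset.range (n/2+1), (catalan k : ℤ) * (m.choose (2*k)) * 2^(m-2*k) * (n.choose m)
      = (∑ k ∈ Finset.range (n/2+1), (catalan k : ℤ) * (m.choose (2*k)) * 2^(m-2*k)) * (n.choose m) := by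
    rw [Finset.sum_mul]
  rw [factored]
  rcases le_or_gt m n with hmn | hmn
  · have hz : ∀ N : ℕ, m < N → ∀ x ∈ Finset.range (n+1), x ∉ Finset.range N →
        (catalan x : ℤ) * (m.choose (2*x)) * 2^(m-2*x) = 0 := by
      intro N hN x hx hnx
      rw [mem_range, not_lt] at hnx
      rw [Nat.choose_eq_zero_of_lt (by omega), Nat.cast_zero, mul_zero, zero_mul]
    have e1 : ∑ k ∈ Finset.range (n/2+1), (catalan k : ℤ) * (m.choose (2*k)) * 2^(m-2*k)
        = ∑ k ∈ Finset.range (n+1), (catalan k : ℤ) * (m.choose (2*k)) * 2^(m-2*k) :=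
      Finset.sum_subset (Finset.range_subset_range.2 (by omega)) (by
        intro x hx hnx
        rw [mem_range, not_lt] at hnx
        have : m < 2*x := by omega
        rw [Nat.choose_eq_zero_of_lt this, Nat.cast_zero, mul_zero, zero_mul])
    have e2 : ∑ k ∈ Finset.range (m+1), (catalan k : ℤ) * (m.choose (2*k)) * 2^(m-2*k)
        = ∑ k ∈ Finset.range (n+1), (catalan k : ℤ) * (m.choose (2*k)) * 2^(m-2*k) :=
      Finset.sum_subset (Finset.range_subset_range.2 (by omega)) (by
        intro x hx hnx
        rw [mem_range, not_lt] at hnx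
        have : m < 2*x := by omega
        rw [Nat.choose_eq_zero_of_lt this, Nat.cast_zero, mul_zero, zero_mul])
    rw [e1, ← e2, touchard m]
  · rw [Nat.choose_eq_zero_of_lt hmn, Nat.cast_zero, mul_zero, mul_zero]
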